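/- The operator G maps the cone K into itself: for every u ∈ K, the function Gu is concave on [0,T] and satisfies min_{t∈[0,T]} (Gu)(t) ≥ ρ·‖Gu‖; that is, G(K) ⊆ K. -/

import Mathlib

open Set MeasureTheory Topology

/-- The p-Laplacian map `φ_p(s) = |s|^(p-2) s` (with `φ_p 0 = 0`). -/
noncomputable def phi (p s : ℝ) : ℝ := |s| ^ (p - 2) * s

/-- `h_u(r) = f(u(r)) / (∫₀ᵀ f(u(τ)) dτ)^k`. -/
noncomputable def hfun (T k : ℝ) (f u : ℝ → ℝ) (r : ℝ) : ℝ :=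
  f (u r) / (∫ τ in (0:ℝ)..T, f (u τ)) ^ k

/-- `A_u = −(λβ/(1−β)) ∫₀^η h_u(r) dr`. -/
noncomputable def Afun (T η β lam k : ℝ) (f u : ℝ → ℝ) : ℝ :=
  -(lam * β / (1 - β)) * ∫ r in (0:ℝ)..η, hfun T k f u r

/-- `g_u(s) = λ ∫₀^s h_u(r) dr − A_u`. -/
noncomputable def gfun (T η β lam k : ℝ) (f u : ℝ → ℝ) (s : ℝ) : ℝ :=
  lam * (∫ r in (0:ℝ)..s, hfun T k f u r) - Afun T η β lam k f u

/-- `B_u = (1/(1−β)) ( ∫₀^T φ_q(g_u(s)) ds − β ∫₀^η φ_q(g_u(s)) ds )`. -/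
noncomputable def Bfun (T η β lam k q : ℝ) (f u : ℝ → ℝ) : ℝ :=
  (1 / (1 - β)) * ((∫ s in (0:ℝ)..T, phi q (gfun T η β lam k f u s))
    - β * ∫ s in (0:ℝ)..η, phi q (gfun T η β lam k f u s))

/-- `u` (with derivative `u'`) is a solution of the boundary value problem:
`u` is continuously differentiable on `[0,T]`, `φ_p ∘ u'` is differentiable on `(0,T)` with
`−(φ_p(u'(t)))' = λ h_u(t)` there, `φ_p(u'(0)) − β φ_p(u'(η)) = 0` and `u(T) − β u(η) = 0`. -/
def IsSolution (T η β lam k p : ℝ) (f u u' : ℝ → ℝ) : Prop :=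
  (∀ t ∈ Set.Icc (0:ℝ) T, HasDerivWithinAt u (u' t) (Set.Icc (0:ℝ) T) t) ∧
  ContinuousOn u' (Set.Icc (0:ℝ) T) ∧
  (∀ t ∈ Set.Ioo (0:ℝ) T, HasDerivAt (fun s => phi p (u' s)) (-(lam * hfun T k f u t)) t) ∧
  phi p (u' 0) - β * phi p (u' η) = 0 ∧
  u T - β * u η = 0

/-- The operator `G` of the integral equation: `(Gu)(t) = −∫₀ᵗ φ_q(g_u(s)) ds + B_u`. -/
noncomputable def Gop (T η β lam k q : ℝ) (f u : ℝ → ℝ) (t : ℝ) : ℝ :=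
  -(∫ s in (0:ℝ)..t, phi q (gfun T η β lam k f u s)) + Bfun T η β lam k q f u

/-- The sup norm of `u` over `[0,T]`. -/
noncomputable def supNorm (T : ℝ) (u : ℝ → ℝ) : ℝ := ⨆ t : Set.Icc (0:ℝ) T, |u t|

/-- Membership in the cone `K`: `u` is continuous and concave on `[0,T]` and
`min_{[0,T]} u ≥ ρ ‖u‖`. -/
def InCone (T ρ : ℝ) (u : ℝ → ℝ) : Prop :=
  ContinuousOn u (Set.Icc (0:ℝ) T) ∧ ConcaveOn ℝ (Set.Icc (0:ℝ) T) u ∧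
    ∀ t ∈ Set.Icc (0:ℝ) T, ρ * supNorm T u ≤ u t

lemma phi_of_pos {q x : ℝ} (hx : 0 < x) : phi q x = x ^ (q - 1) := by
  unfold phi
  rw [abs_of_pos hx, ← Real.rpow_add_one hx.ne']
  congr 1
  ring


lemma cone_aux (T η β B : ℝ) (w : ℝ → ℝ)
    (hT : 0 < T) (hη : 0 < η) (hηT : η < T) (hβ0 : 0 < β) (hβ1 : β < 1)
    (hwpos : ∀ s ∈ Icc (0:ℝ) T, 0 < w s)
    (hwmono : ∀ s₁ ∈ Icc (0:ℝ) T, ∀ s₂ ∈ Icc (0:ℝ) T, s₁ ≤ s₂ → w s₁ ≤ w s₂)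
    (hwcont : ContinuousOn w (Icc (0:ℝ) T))
    (hB : B = (1/(1-β)) * ((∫ s in (0:ℝ)..T, w s) - β * ∫ s in (0:ℝ)..η, w s)) :
    (ContinuousOn (fun t => -(∫ s in (0:ℝ)..t, w s) + B) (Icc (0:ℝ) T) ∧
     ConcaveOn ℝ (Icc (0:ℝ) T) (fun t => -(∫ s in (0:ℝ)..t, w s) + B) ∧
     ∀ t ∈ Icc (0:ℝ) T, (β * (T - η) / (T - β * η)) *
        (⨆ r : Icc (0:ℝ) T, |(fun t => -(∫ s in (0:ℝ)..t, w s) + B) r|)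
        ≤ (fun t => -(∫ s in (0:ℝ)..t, w s) + B) t) := by
  have hβ1' : (0:ℝ) < 1 - β := by linarith
  have hηI : η ∈ Icc (0:ℝ) T := ⟨hη.le, hηT.le⟩
  have h0I : (0:ℝ) ∈ Icc (0:ℝ) T := ⟨le_rfl, hT.le⟩
  have hTI : T ∈ Icc (0:ℝ) T := ⟨hT.le, le_rfl⟩
  have hwint : ∀ a ∈ Icc (0:ℝ) T, ∀ b ∈ Icc (0:ℝ) T, IntervalIntegrable w volume a b := by
    intro a ha b hb
    exact (hwcont.mono (uIcc_subset_Icc ha hb)).intervalIntegrable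
  set F : ℝ → ℝ := fun t => -(∫ s in (0:ℝ)..t, w s) + B with hF
  -- antitonicity of F
  have hFanti : ∀ t₁ ∈ Icc (0:ℝ) T, ∀ t₂ ∈ Icc (0:ℝ) T, t₁ ≤ t₂ → F t₂ ≤ F t₁ := by
    intro t₁ h₁ t₂ h₂ h12
    have hsplit := intervalIntegral.integral_add_adjacent_intervals
      (hwint 0 h0I t₁ h₁) (hwint t₁ h₁ t₂ h₂)
    have hnn : 0 ≤ ∫ s in t₁..t₂, w s :=
      intervalIntegral.integral_nonneg h12
        (fun x hx => (hwpos x ⟨le_trans h₁.1 hx.1, le_trans hx.2 h₂.2⟩).le)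
    simp only [hF]
    linarith [hsplit, hnn]
  -- continuity of F
  have hFcont : ContinuousOn F (Icc (0:ℝ) T) := by
    have hprim : ContinuousOn (fun t => ∫ s in (0:ℝ)..t, w s) (Icc (0:ℝ) T) := by
      have := intervalIntegral.continuousOn_primitive_interval'
        (hwint 0 h0I T hTI) (left_mem_uIcc (a := (0:ℝ)) (b := T))
      rwa [uIcc_of_le hT.le] at this
    exact hprim.neg.add continuousOn_const
  -- derivative of F on the interior
  have hFderiv : ∀ t ∈ Ioo (0:ℝ) T, HasDerivAt F (-(w t)) t := by
    intro t ht
    have htI : t ∈ Icc (0:ℝ) T := ⟨ht.1.le, ht.2.le⟩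
    have hmeas : StronglyMeasurableAtFilter w (𝓝 t) volume :=
      ContinuousOn.stronglyMeasurableAtFilter isOpen_Ioo
        (hwcont.mono Ioo_subset_Icc_self) t ht
    have hct : ContinuousAt w t := hwcont.continuousAt (Icc_mem_nhds ht.1 ht.2)
    have hprim : HasDerivAt (fun x => ∫ s in (0:ℝ)..x, w s) (w t) t :=
      intervalIntegral.integral_hasDerivAt_right (hwint 0 h0I t htI) hmeas hct
    exact hprim.neg.add_const B
  -- concavity
  have hFconc : ConcaveOn ℝ (Icc (0:ℝ) T) F := by
    apply AntitoneOn.concaveOn_of_deriv (convex_Icc (0:ℝ) T) hFcont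
    · rw [interior_Icc]
      exact fun t ht => (hFderiv t ht).differentiableAt.differentiableWithinAt
    · rw [interior_Icc]
      intro s hs t ht hst
      rw [(hFderiv s hs).deriv, (hFderiv t ht).deriv]
      have := hwmono s ⟨hs.1.le, hs.2.le⟩ t ⟨ht.1.le, ht.2.le⟩ hst
      linarith
  -- boundary relation
  have hFT : F T = β * F η := by
    simp only [hF]
    rw [hB]
    field_simp
    ring
  have hFηT : F T ≤ F η := hFanti η hηI T hTI hηT.le
  have hFT0 : 0 ≤ F T := by nlinarith
  have hFnonneg : ∀ t ∈ Icc (0:ℝ) T, 0 ≤ F t :=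
    fun t ht => le_trans hFT0 (hFanti t ht T hTI ht.2)
  -- concavity inequality at η
  have key : (T - η) * F 0 + η * F T ≤ T * F η := by
    have ha : (0:ℝ) ≤ (T - η)/T := div_nonneg (by linarith) hT.le
    have hb : (0:ℝ) ≤ η/T := by positivity
    have hab : (T - η)/T + η/T = 1 := by field_simp; ring
    have := hFconc.2 h0I hTI ha hb hab
    simp only [smul_eq_mul, mul_zero, zero_add] at this
    rw [div_mul_cancel₀ _ hT.ne'] at this
    have hT' : (T:ℝ) ≠ 0 := hT.ne'
    rw [div_mul_eq_mul_div, div_mul_eq_mul_div, ← add_div, div_le_iff₀ hT] at this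
    linarith [this]
  have hTβη : (0:ℝ) < T - β * η := by nlinarith
  have hρpos : (0:ℝ) < β * (T - η) / (T - β * η) := div_pos (mul_pos hβ0 (by linarith)) hTβη
  -- the key ratio inequality
  have hρ : β * (T - η) / (T - β * η) * F 0 ≤ F T := by
    rw [div_mul_eq_mul_div, div_le_iff₀ hTβη]
    nlinarith [mul_le_mul_of_nonneg_left key hβ0.le, hFT, hT, hβ0]
  -- sup norm bound
  haveI : Nonempty (Icc (0:ℝ) T) := ⟨⟨0, h0I⟩⟩
  have hsup : (⨆ r : Icc (0:ℝ) T, |F r|) ≤ F 0 := by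
    apply ciSup_le
    intro r
    rw [abs_of_nonneg (hFnonneg r r.2)]
    exact hFanti 0 h0I r r.2 r.2.1
  refine ⟨hFcont, hFconc, fun t ht => ?_⟩
  calc β * (T - η) / (T - β * η) * (⨆ r : Icc (0:ℝ) T, |F r|)
      ≤ β * (T - η) / (T - β * η) * F 0 :=
        mul_le_mul_of_nonneg_left hsup hρpos.le
    _ ≤ F T := hρ
    _ ≤ F t := hFanti t ht T hTI ht.2

/-- `G` maps the cone `K` into itself: `G(K) ⊆ K`. -/
theorem G_maps_cone_into_cone
    (T η β lam k p q : ℝ) (f : ℝ → ℝ)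
    (hT : 0 < T) (hη : 0 < η) (hηT : η < T) (hβ0 : 0 < β) (hβ1 : β < 1)
    (hlam : 0 < lam) (hk : 0 < k) (hp : 1 < p) (hpq : 1 / p + 1 / q = 1)
    (hf : Continuous f) (hfpos : ∀ x, 0 < f x) :
    ∀ u : ℝ → ℝ, InCone T (β * (T - η) / (T - β * η)) u →
      InCone T (β * (T - η) / (T - β * η)) (Gop T η β lam k q f u) := by
  intro u hu
  obtain ⟨huc, -, -⟩ := hu
  have hβ1' : (0:ℝ) < 1 - β := by linarith
  have h0I : (0:ℝ) ∈ Icc (0:ℝ) T := ⟨le_rfl, hT.le⟩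
  have hTI : T ∈ Icc (0:ℝ) T := ⟨hT.le, le_rfl⟩
  have hηI : η ∈ Icc (0:ℝ) T := ⟨hη.le, hηT.le⟩
  -- q > 1
  have hp0 : (0:ℝ) < p := by linarith
  have h1q : 0 < 1/q := by
    have : 1/p < 1 := by rw [div_lt_one hp0]; exact hp
    linarith
  have hq0 : 0 < q := one_div_pos.mp h1q
  have hq1 : 1 < q := by
    have h1p : 0 < 1/p := by positivity
    have : 1/q < 1 := by linarith
    exact (div_lt_one hq0).mp this
  -- continuity and positivity of hfun
  have hfu : ContinuousOn (fun τ => f (u τ)) (Icc (0:ℝ) T) := hf.comp_continuousOn huc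
  have hfuint : IntervalIntegrable (fun τ => f (u τ)) volume 0 T :=
    (hfu.mono (uIcc_of_le hT.le).subset).intervalIntegrable
  have hC : 0 < (∫ τ in (0:ℝ)..T, f (u τ)) ^ k :=
    Real.rpow_pos_of_pos
      (intervalIntegral.intervalIntegral_pos_of_pos_on hfuint (fun x _ => hfpos _) hT) k
  have hhpos : ∀ r, 0 < hfun T k f u r := fun r => div_pos (hfpos _) hC
  have hhcont : ContinuousOn (hfun T k f u) (Icc (0:ℝ) T) := by
    unfold hfun
    exact hfu.div_const _
  have hhint : ∀ a ∈ Icc (0:ℝ) T, ∀ b ∈ Icc (0:ℝ) T,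
      IntervalIntegrable (hfun T k f u) volume a b := fun a ha b hb =>
    (hhcont.mono (uIcc_subset_Icc ha hb)).intervalIntegrable
  -- primitive of hfun
  have hPnonneg : ∀ s ∈ Icc (0:ℝ) T, 0 ≤ ∫ r in (0:ℝ)..s, hfun T k f u r := fun s hs =>
    intervalIntegral.integral_nonneg hs.1 (fun x _ => (hhpos x).le)
  have hPmono : ∀ s₁ ∈ Icc (0:ℝ) T, ∀ s₂ ∈ Icc (0:ℝ) T, s₁ ≤ s₂ →
      (∫ r in (0:ℝ)..s₁, hfun T k f u r) ≤ ∫ r in (0:ℝ)..s₂, hfun T k f u r := by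
    intro s₁ h₁ s₂ h₂ h12
    have hsplit := intervalIntegral.integral_add_adjacent_intervals
      (hhint 0 h0I s₁ h₁) (hhint s₁ h₁ s₂ h₂)
    have hnn : 0 ≤ ∫ r in s₁..s₂, hfun T k f u r :=
      intervalIntegral.integral_nonneg h12 (fun x _ => (hhpos x).le)
    linarith
  have hPcont : ContinuousOn (fun s => ∫ r in (0:ℝ)..s, hfun T k f u r) (Icc (0:ℝ) T) := by
    have := intervalIntegral.continuousOn_primitive_interval'
      (hhint 0 h0I T hTI) (left_mem_uIcc (a := (0:ℝ)) (b := T))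
    rwa [uIcc_of_le hT.le] at this
  have hPη : 0 < ∫ r in (0:ℝ)..η, hfun T k f u r :=
    intervalIntegral.intervalIntegral_pos_of_pos_on (hhint 0 h0I η hηI)
      (fun x _ => hhpos x) hη
  -- g facts
  have hApos : 0 < -(Afun T η β lam k f u) := by
    unfold Afun
    have : 0 < lam * β / (1 - β) := by positivity
    nlinarith
  have hgpos : ∀ s ∈ Icc (0:ℝ) T, 0 < gfun T η β lam k f u s := by
    intro s hs
    unfold gfun
    have h1 := hPnonneg s hs
    nlinarith
  have hgmono : ∀ s₁ ∈ Icc (0:ℝ) T, ∀ s₂ ∈ Icc (0:ℝ) T, s₁ ≤ s₂ →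
      gfun T η β lam k f u s₁ ≤ gfun T η β lam k f u s₂ := by
    intro s₁ h₁ s₂ h₂ h12
    unfold gfun
    have := hPmono s₁ h₁ s₂ h₂ h12
    nlinarith
  have hgcont : ContinuousOn (gfun T η β lam k f u) (Icc (0:ℝ) T) := by
    unfold gfun
    exact (continuousOn_const.mul hPcont).sub continuousOn_const
  -- w := phi q ∘ g
  set w : ℝ → ℝ := fun s => phi q (gfun T η β lam k f u s) with hw
  have hwpos : ∀ s ∈ Icc (0:ℝ) T, 0 < w s := by
    intro s hs
    rw [hw]
    simp only
    rw [phi_of_pos (hgpos s hs)]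
    exact Real.rpow_pos_of_pos (hgpos s hs) _
  have hwmono : ∀ s₁ ∈ Icc (0:ℝ) T, ∀ s₂ ∈ Icc (0:ℝ) T, s₁ ≤ s₂ → w s₁ ≤ w s₂ := by
    intro s₁ h₁ s₂ h₂ h12
    rw [hw]
    simp only
    rw [phi_of_pos (hgpos s₁ h₁), phi_of_pos (hgpos s₂ h₂)]
    exact Real.rpow_le_rpow (hgpos s₁ h₁).le (hgmono s₁ h₁ s₂ h₂ h12) (by linarith)
  have hwcont : ContinuousOn w (Icc (0:ℝ) T) := by
    have hc : ContinuousOn (fun s => gfun T η β lam k f u s ^ (q - 1)) (Icc (0:ℝ) T) :=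
      hgcont.rpow_const (fun x hx => Or.inl (hgpos x hx).ne')
    exact hc.congr (fun s hs => phi_of_pos (hgpos s hs))
  have := cone_aux T η β (Bfun T η β lam k q f u) w hT hη hηT hβ0 hβ1
    hwpos hwmono hwcont rfl
  exact this
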